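/- arXiv:1807.00845 — 10 statements merged into one kernel-verified Lean document; each statement's English description precedes it below -/
import Mathlib

section
/- Let F be a nonempty meager compact subset of a Polish space E. Then there exists a sequence (F_n) of pairwise disjoint nonempty regular closed sets (i.e., each F_n equals the closure of its interior), each disjoint from F, such that F_n converges to F in the Hausdorff metric. -/
open Metric Filter Topology

lemma stmt3_step {E : Type*} [MetricSpace E] (F : Set E) (hFc : IsCompact F)
    (hFne : F.Nonempty) (hd : Dense Fᶜ) {δ : ℝ} (hδ : 0 < δ) :
    ∃ (S : Set E) (c : ℝ), 0 < c ∧ closure (interior S) = S ∧ S.Nonempty ∧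
      (∀ z ∈ S, c ≤ infDist z F ∧ infDist z F ≤ δ) ∧ hausdorffDist S F ≤ δ := by
  classical
  obtain ⟨t, htF, htfin, hcov⟩ := hFc.finite_cover_balls (show (0:ℝ) < δ/4 by linarith)
  have hx : ∀ y : E, ∃ x, x ∈ ball y (δ/4) ∧ x ∉ F := by
    intro y
    obtain ⟨x, hx1, hx2⟩ := hd.inter_open_nonempty (ball y (δ/4)) isOpen_ball
      (nonempty_ball.2 (by linarith))
    exact ⟨x, hx1, hx2⟩
  choose x hxball hxF using hx
  have hFcl : IsClosed F := hFc.isClosed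
  set r : E → ℝ := fun y => infDist (x y) F / 2 with hr
  have hrpos : ∀ y, 0 < r y := fun y => by
    have := (hFcl.notMem_iff_infDist_pos hFne).1 (hxF y)
    simp only [hr]; positivity
  have hrlt : ∀ y ∈ t, infDist (x y) F < δ/4 := fun y hy =>
    lt_of_le_of_lt (infDist_le_dist_of_mem (htF hy)) (by simpa [dist_comm] using hxball y)
  set U : Set E := ⋃ y ∈ t, ball (x y) (r y) with hU
  set S : Set E := closure U with hS
  have htne : t.Nonempty := by
    obtain ⟨p, hp⟩ := hFne
    obtain ⟨y, hy, -⟩ := Set.mem_iUnion₂.1 (hcov hp)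
    exact ⟨y, hy⟩
  set C : Set E := ⋃ y ∈ t, closedBall (x y) (r y) with hC
  have hCcl : IsClosed C := htfin.isClosed_biUnion fun y _ => isClosed_closedBall
  have hSC : S ⊆ C := closure_minimal
    (Set.iUnion₂_mono fun y _ => ball_subset_closedBall) hCcl
  obtain ⟨y₀, hy₀t, hy₀min⟩ := Set.exists_min_image t r htfin htne
  refine ⟨S, r y₀, hrpos y₀, ?_, ?_, ?_, ?_⟩
  · -- regular closed
    apply subset_antisymm
    · exact (closure_minimal interior_subset isClosed_closure)
    · exact closure_mono (isOpen_iUnion (fun y => isOpen_iUnion fun _ => isOpen_ball)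
        |>.subset_interior_iff.2 subset_closure)
  · -- nonempty
    exact ⟨x y₀, subset_closure (Set.mem_biUnion hy₀t (mem_ball_self (hrpos y₀)))⟩
  · intro z hz
    obtain ⟨y, hy, hzy⟩ := Set.mem_iUnion₂.1 (hSC hz)
    have hzy' : dist z (x y) ≤ r y := mem_closedBall.1 hzy
    constructor
    · have h1 : infDist (x y) F ≤ infDist z F + dist z (x y) := by
        rw [dist_comm]; exact infDist_le_infDist_add_dist
      have hmin := hy₀min y hy
      simp only [hr] at hmin hzy'
      show infDist (x y₀) F / 2 ≤ infDist z F
      linarith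
    · have h2 : infDist z F ≤ infDist (x y) F + dist z (x y) := infDist_le_infDist_add_dist
      have h3 := hrlt y hy
      simp only [hr] at hzy'
      linarith
  · -- hausdorff
    apply hausdorffDist_le_of_mem_dist hδ.le
    · intro z hz
      obtain ⟨y, hy, hzy⟩ := Set.mem_iUnion₂.1 (hSC hz)
      obtain ⟨w, hwF, hw⟩ := hFc.exists_infDist_eq_dist hFne z
      refine ⟨w, hwF, ?_⟩
      rw [← hw]
      have h2 : infDist z F ≤ infDist (x y) F + dist z (x y) := infDist_le_infDist_add_dist
      have h3 := hrlt y hy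
      have h4 : dist z (x y) ≤ r y := mem_closedBall.1 hzy
      simp only [hr] at h4
      linarith
    · intro p hp
      obtain ⟨y, hy, hpy⟩ := Set.mem_iUnion₂.1 (hcov hp)
      refine ⟨x y, subset_closure (Set.mem_biUnion hy (mem_ball_self (hrpos y))), ?_⟩
      have h1 : dist p (x y) ≤ dist p y + dist y (x y) := dist_triangle _ _ _
      have h2 : dist p y < δ/4 := mem_ball.1 hpy
      have h3 : dist y (x y) < δ/4 := by simpa [dist_comm] using mem_ball.1 (hxball y)
      linarith

/-- If `F` is a nonempty meager compact subset of a Polish space `E`, then there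
is a sequence `(Fₙ)` of pairwise disjoint nonempty regular closed sets, each disjoint from
`F`, converging to `F` in the Hausdorff metric. -/
theorem stmt_3 {E : Type*} [MetricSpace E] [CompleteSpace E] [SecondCountableTopology E]
    (F : Set E) (hFc : IsCompact F) (hFm : IsMeagre F) (hFne : F.Nonempty) :
    ∃ Fs : ℕ → Set E,
      (∀ n, IsClosed (Fs n) ∧ (Fs n).Nonempty ∧ closure (interior (Fs n)) = Fs n ∧
        Disjoint (Fs n) F) ∧
      Pairwise (Function.onFun Disjoint Fs) ∧
      Tendsto (fun n => hausdorffDist (Fs n) F) atTop (𝓝 0) := by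
  classical
  have hd : Dense Fᶜ := dense_of_mem_residual hFm
  have key : ∀ δ : ℝ, ∃ (S : Set E) (c : ℝ), 0 < δ →
      (0 < c ∧ closure (interior S) = S ∧ S.Nonempty ∧
        (∀ z ∈ S, c ≤ infDist z F ∧ infDist z F ≤ δ) ∧ hausdorffDist S F ≤ δ) := by
    intro δ
    by_cases hδ : 0 < δ
    · obtain ⟨S, c, h⟩ := stmt3_step F hFc hFne hd hδ
      exact ⟨S, c, fun _ => h⟩
    · exact ⟨∅, 0, fun h => absurd h hδ⟩
  choose S c hkey using key
  -- the recursive sequence of scales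
  let δ : ℕ → ℝ := fun n => Nat.rec 1 (fun n d => min d (c d) / 2) n
  have hδ0 : δ 0 = 1 := rfl
  have hδsucc : ∀ n, δ (n + 1) = min (δ n) (c (δ n)) / 2 := fun n => rfl
  have hδpos : ∀ n, 0 < δ n := by
    intro n
    induction n with
    | zero => norm_num [hδ0]
    | succ n ih =>
      have hc := (hkey (δ n) ih).1
      rw [hδsucc]
      positivity
  have hprop : ∀ n, 0 < c (δ n) ∧ closure (interior (S (δ n))) = S (δ n) ∧
      (S (δ n)).Nonempty ∧
      (∀ z ∈ S (δ n), c (δ n) ≤ infDist z F ∧ infDist z F ≤ δ n) ∧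
      hausdorffDist (S (δ n)) F ≤ δ n := fun n => hkey (δ n) (hδpos n)
  have hδhalf : ∀ n, δ (n + 1) ≤ δ n / 2 := by
    intro n
    rw [hδsucc]
    have := min_le_left (δ n) (c (δ n))
    linarith
  have hδanti : ∀ m n, m ≤ n → δ n ≤ δ m := by
    have h : ∀ n, δ (n + 1) ≤ δ n := fun n =>
      (hδhalf n).trans (by linarith [hδpos n])
    exact fun m n hmn => antitone_nat_of_succ_le h hmn
  have hδc : ∀ n, δ (n + 1) < c (δ n) := by
    intro n
    rw [hδsucc]
    have h1 := min_le_right (δ n) (c (δ n))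
    have h2 := (hprop n).1
    linarith
  have hδpow : ∀ n, δ n ≤ (1/2 : ℝ) ^ n := by
    intro n
    induction n with
    | zero => norm_num [hδ0]
    | succ n ih =>
      calc δ (n + 1) ≤ δ n / 2 := hδhalf n
        _ ≤ (1/2 : ℝ) ^ n / 2 := by linarith
        _ = (1/2 : ℝ) ^ (n + 1) := by ring
  refine ⟨fun n => S (δ n), fun n => ?_, ?_, ?_⟩
  · obtain ⟨hc, hreg, hne, hbd, hhd⟩ := hprop n
    refine ⟨?_, hne, hreg, Set.disjoint_left.2 fun z hz hzF => ?_⟩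
    · show IsClosed (S (δ n)); rw [← hreg]; exact isClosed_closure
    have h1 := (hbd z hz).1
    have h2 : infDist z F = 0 := infDist_zero_of_mem hzF
    rw [h2] at h1
    exact absurd (lt_of_lt_of_le hc h1) (lt_irrefl 0)
  · -- pairwise disjoint
    have main : ∀ m n, m < n → Disjoint (S (δ n)) (S (δ m)) := by
      intro m n hmn
      refine Set.disjoint_left.2 fun z hzn hzm => ?_
      have h1 : infDist z F ≤ δ n := ((hprop n).2.2.2.1 z hzn).2
      have h2 : c (δ m) ≤ infDist z F := ((hprop m).2.2.2.1 z hzm).1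
      have h3 : δ n ≤ δ (m + 1) := hδanti (m + 1) n hmn
      have h4 := hδc m
      linarith
    intro m n hmn
    rcases lt_or_gt_of_ne hmn with h | h
    · exact (main m n h).symm
    · exact main n m h
  · -- convergence
    have h0 : Tendsto (fun n : ℕ => (1/2 : ℝ) ^ n) atTop (𝓝 0) :=
      tendsto_pow_atTop_nhds_zero_of_lt_one (by norm_num) (by norm_num)
    refine squeeze_zero (fun n => hausdorffDist_nonneg) (fun n => ?_) h0
    exact ((hprop n).2.2.2.2).trans (hδpow n)
end

section
/- Let E be a compact Polish space, let I ⊆ K(E) be an ideal of compact sets closed under countable unions of its members whose union is compact, and let F ⊆ E be closed. Then F can be written as F = F' ∪ ⋃_n F_n, where each F_n is a compact set in I, and F' is a closed subset of F which is either empty or satisfies: for every open U ⊆ E with U ∩ F' ≠ ∅, the closure of U ∩ F' is not in I. -/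
open Set TopologicalSpace

/-- For a σ-ideal `I` of compact subsets of a compact Polish space `E` and a
closed set `F ⊆ E`, one can write `F = F' ∪ ⋃ₙ Fₙ` with each `Fₙ` a compact set in `I` and
`F'` a closed subset of `F` that is either empty or everywhere big with respect to `I`. -/
theorem stmt_4 {E : Type*} [MetricSpace E] [CompactSpace E]
    (I : Set (Set E)) (hIne : I.Nonempty)
    (hIcomp : ∀ K ∈ I, IsCompact K)
    (hIdown : ∀ K ∈ I, ∀ L : Set E, L ⊆ K → IsCompact L → L ∈ I)
    (hIunion : ∀ K ∈ I, ∀ L ∈ I, K ∪ L ∈ I)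
    (hIsigma : ∀ f : ℕ → Set E, (∀ n, f n ∈ I) → IsCompact (⋃ n, f n) → (⋃ n, f n) ∈ I)
    (F : Set E) (hF : IsClosed F) :
    ∃ (F' : Set E) (Fs : ℕ → Set E),
      IsClosed F' ∧ F' ⊆ F ∧ (∀ n, Fs n ∈ I) ∧ F = F' ∪ ⋃ n, Fs n ∧
      (F' = ∅ ∨ ∀ U : Set E, IsOpen U → (U ∩ F').Nonempty → closure (U ∩ F') ∉ I) := by
  classical
  obtain ⟨K0, hK0⟩ := hIne
  have hempty : (∅ : Set E) ∈ I := hIdown K0 hK0 ∅ (empty_subset _) isCompact_empty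
  -- countable basis
  have hB : IsTopologicalBasis (countableBasis E) := isBasis_countableBasis E
  have hBc : (insert (∅ : Set E) (countableBasis E)).Countable :=
    (countable_countableBasis E).insert ∅
  obtain ⟨b, hb⟩ := hBc.exists_eq_range (insert_nonempty _ _)
  -- pieces
  set Fs : ℕ → Set E := fun n => if closure (b n ∩ F) ∈ I then closure (b n ∩ F) else ∅ with hFs
  set V : Set E := ⋃ n, (if closure (b n ∩ F) ∈ I then b n else ∅) with hV
  have hVopen : IsOpen V := by
    apply isOpen_iUnion
    intro n
    split
    · have : b n ∈ insert (∅ : Set E) (countableBasis E) := hb ▸ mem_range_self n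
      rcases this with h | h
      · simp [h]
      · exact (isOpen_of_mem_countableBasis h)
    · exact isOpen_empty
  set F' : Set E := F \ V with hF'
  have hF'closed : IsClosed F' := hF.sdiff hVopen
  have hFsI : ∀ n, Fs n ∈ I := by
    intro n
    simp only [hFs]
    split
    · assumption
    · exact hempty
  have hFsF : ∀ n, Fs n ⊆ F := by
    intro n
    simp only [hFs]
    split_ifs with h
    · exact (closure_minimal (inter_subset_right) hF)
    · exact empty_subset _
  have hcover : F ⊆ F' ∪ ⋃ n, Fs n := by
    intro x hx
    by_cases hxV : x ∈ V
    · right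
      obtain ⟨n, hn⟩ := mem_iUnion.1 hxV
      by_cases hcl : closure (b n ∩ F) ∈ I
      · rw [if_pos hcl] at hn
        refine mem_iUnion.2 ⟨n, ?_⟩
        show x ∈ Fs n
        simp only [hFs, if_pos hcl]
        exact subset_closure ⟨hn, hx⟩
      · rw [if_neg hcl] at hn
        exact hn.elim
    · exact Or.inl ⟨hx, hxV⟩
  have hFeq : F = F' ∪ ⋃ n, Fs n := by
    apply Subset.antisymm hcover
    rintro x (⟨hx, -⟩ | hx)
    · exact hx
    · obtain ⟨n, hn⟩ := mem_iUnion.1 hx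
      exact hFsF n hn
  refine ⟨F', Fs, hF'closed, fun x hx => hx.1, hFsI, hFeq, Or.inr ?_⟩
  intro U hU ⟨x, hxU, hxF'⟩ hclI
  -- find a basic set around x with closure inside U
  obtain ⟨r, hr, hrU⟩ := Metric.isOpen_iff.1 hU x hxU
  obtain ⟨t, htB, hxt, htsub⟩ :=
    hB.exists_subset_of_mem_open (Metric.mem_ball_self (by linarith : (0:ℝ) < r/2))
      Metric.isOpen_ball
  have : t ∈ insert (∅ : Set E) (countableBasis E) := mem_insert_of_mem _ htB
  rw [hb] at this
  obtain ⟨n, hn⟩ := this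
  have hclb : closure (b n) ⊆ U := by
    rw [hn]
    calc closure t ⊆ closure (Metric.ball x (r/2)) := closure_mono htsub
    _ ⊆ Metric.closedBall x (r/2) := Metric.closure_ball_subset_closedBall
    _ ⊆ Metric.ball x r := Metric.closedBall_subset_ball (by linarith)
    _ ⊆ U := hrU
  -- show closure (b n ∩ F) ∈ I
  set C : Set E := closure (b n ∩ F) with hC
  have hCcomp : IsCompact C := isClosed_closure.isCompact
  have hCF : C ⊆ F := closure_minimal inter_subset_right hF
  set g : ℕ → Set E := fun k => Nat.rec (C ∩ closure (U ∩ F')) (fun m _ => C ∩ Fs m) k with hg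
  have hgI : ∀ k, g k ∈ I := by
    intro k
    cases k with
    | zero =>
        exact hIdown _ hclI _ inter_subset_right
          ((hIcomp _ hclI).of_isClosed_subset (hCcomp.isClosed.inter (hIcomp _ hclI).isClosed)
            inter_subset_right)
    | succ m =>
        exact hIdown _ (hFsI m) _ inter_subset_right
          ((hIcomp _ (hFsI m)).of_isClosed_subset
            (hCcomp.isClosed.inter (hIcomp _ (hFsI m)).isClosed) inter_subset_right)
  have hgunion : (⋃ k, g k) = C := by
    apply Subset.antisymm
    · exact iUnion_subset fun k => by cases k <;> exact inter_subset_left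
    · intro y hy
      have hyF : y ∈ F := hCF hy
      rcases hcover hyF with hyF' | hyFs
      · refine mem_iUnion.2 ⟨0, hy, ?_⟩
        have hyb : y ∈ closure (b n) := closure_mono inter_subset_left hy
        exact subset_closure ⟨hclb hyb, hyF'⟩
      · obtain ⟨m, hm⟩ := mem_iUnion.1 hyFs
        exact mem_iUnion.2 ⟨m + 1, hy, hm⟩
  have hCI : C ∈ I := by
    have := hIsigma g hgI (by rw [hgunion]; exact hCcomp)
    rwa [hgunion] at this
  -- contradiction with x ∈ F'
  have hxV : x ∈ V := by
    refine mem_iUnion.2 ⟨n, ?_⟩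
    rw [if_pos hCI]
    exact hn ▸ hxt
  exact hxF'.2 hxV
end

section
/- Let E be a nonempty Polish space, let I be a family of closed subsets of E closed under taking closed subsets, and let G ⊆ E be a nonempty G_δ set such that for every open U ⊆ E with U ∩ G ≠ ∅, the closure of U ∩ G is not in I. Then G cannot be covered by countably many sets in I. -/
/-- A Gδ subset of a Polish space is Polish. -/
lemma aux_isGδ_polishSpace {E : Type*} [TopologicalSpace E] [PolishSpace E]
    {G : Set E} (hG : IsGδ G) : PolishSpace ↥G := by
  obtain ⟨U, hUo, rfl⟩ := hG.eq_iInter_nat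
  haveI : ∀ n, PolishSpace ↥(U n) := fun n => (hUo n).polishSpace
  set φ : ↥(⋂ n, U n) → (Π n, ↥(U n)) :=
    fun x n => ⟨x.1, Set.mem_iInter.1 x.2 n⟩ with hφ
  have hφc : Continuous φ := by
    apply continuous_pi
    intro n
    exact Continuous.subtype_mk continuous_subtype_val _
  have hind : Topology.IsInducing φ := by
    have : Topology.IsInducing ((fun p : Π n, ↥(U n) => (p 0 : E)) ∘ φ) :=
      Topology.IsInducing.subtypeVal
    exact this.of_comp hφc (continuous_subtype_val.comp (continuous_apply 0))
  have hinj : Function.Injective φ := by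
    intro x y hxy
    have := congrArg (fun p => (p 0 : E)) hxy
    exact Subtype.ext this
  have hrange : Set.range φ = {p : Π n, ↥(U n) | ∀ n, (p n : E) = (p 0 : E)} := by
    ext p
    constructor
    · rintro ⟨x, rfl⟩
      intro n
      rfl
    · intro hp
      have hmem : (p 0 : E) ∈ ⋂ n, U n := Set.mem_iInter.2 fun n => hp n ▸ (p n).2
      refine ⟨⟨(p 0 : E), hmem⟩, ?_⟩
      funext n
      exact Subtype.ext (hp n).symm
  have hclosed : IsClosed (Set.range φ) := by
    rw [hrange]
    have : {p : Π n, ↥(U n) | ∀ n, (p n : E) = (p 0 : E)}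
        = ⋂ n, {p : Π n, ↥(U n) | (p n : E) = (p 0 : E)} := by
      ext p; simp [Set.mem_iInter]
    rw [this]
    exact isClosed_iInter fun n =>
      isClosed_eq (continuous_subtype_val.comp (continuous_apply n))
        (continuous_subtype_val.comp (continuous_apply 0))
  have hce : Topology.IsClosedEmbedding φ := ⟨⟨hind, hinj⟩, hclosed⟩
  exact hce.polishSpace

/-- In a nonempty Polish space, a nonempty G_δ set all of whose nonempty
relatively open subsets have closure outside `I` (a family of closed sets closed under
closed subsets) cannot be covered by countably many sets from `I`. -/
theorem stmt_5 {E : Type*} [TopologicalSpace E] [PolishSpace E] [Nonempty E]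
    (I : Set (Set E))
    (hIclosed : ∀ F ∈ I, IsClosed F)
    (hIdown : ∀ F ∈ I, ∀ F' : Set E, F' ⊆ F → IsClosed F' → F' ∈ I)
    (G : Set E) (hG : IsGδ G) (hGne : G.Nonempty)
    (hbig : ∀ U : Set E, IsOpen U → (U ∩ G).Nonempty → closure (U ∩ G) ∉ I) :
    ¬ ∃ f : ℕ → Set E, (∀ n, f n ∈ I) ∧ G ⊆ ⋃ n, f n := by
  rintro ⟨f, hf, hcov⟩
  haveI : PolishSpace ↥G := aux_isGδ_polishSpace hG
  letI := TopologicalSpace.upgradeIsCompletelyMetrizable ↥G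
  haveI : Nonempty ↥G := hGne.to_subtype
  obtain ⟨n, x, hx⟩ := nonempty_interior_of_iUnion_of_closed
    (f := fun n => ((↑) ⁻¹' (f n) : Set ↥G))
    (fun n => (hIclosed _ (hf n)).preimage continuous_subtype_val)
    (by
      ext x
      simp only [Set.mem_iUnion, Set.mem_preimage, Set.mem_univ, iff_true]
      exact Set.mem_iUnion.1 (hcov x.2))
  obtain ⟨t, hts, hto, hxt⟩ := mem_interior.1 hx
  obtain ⟨U, hUo, hU⟩ := isOpen_induced_iff.1 hto
  have hxU : (x : E) ∈ U := by
    have : x ∈ (Subtype.val ⁻¹' U : Set ↥G) := hU ▸ hxt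
    exact this
  have hne : (U ∩ G).Nonempty := ⟨x, hxU, x.2⟩
  have hsub : U ∩ G ⊆ f n := by
    rintro y ⟨hyU, hyG⟩
    have : (⟨y, hyG⟩ : ↥G) ∈ t := by rw [← hU]; exact hyU
    exact hts this
  have hclsub : closure (U ∩ G) ⊆ f n :=
    (hIclosed _ (hf n)).closure_subset_iff.2 hsub
  exact hbig U hUo hne (hIdown _ (hf n) _ hclsub isClosed_closure)
end

section
/- Let E be a compact Polish space and let I ⊆ K(E) be a nonempty G_δ ideal of compact sets with property (*). Let F ⊆ K(E). Suppose that for every compact K ⊆ E, K ∈ I if and only if K* is meager in F, and suppose that for every nonempty G_δ set G ⊆ E such that every nonempty relatively open subset of G has closure not in I, G* is nonmeager in F. Then for every G_δ set G ⊆ E: G is covered by countably many sets in I if and only if G* is meager in F. -/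
open TopologicalSpace

variable {E : Type*} [MetricSpace E] [CompactSpace E]

/-- `A* = {K ∈ K(E) : K ∩ A ≠ ∅}`. -/
def star (A : Set E) : Set (NonemptyCompacts E) := {K | ((K : Set E) ∩ A).Nonempty}

/-- `S` is meager relative to the subspace `F` of the hyperspace. -/
def MeagerIn (S F : Set (NonemptyCompacts E)) : Prop :=
  IsMeagre (Subtype.val ⁻¹' S : Set F)

lemma meagerIn_mono {S T F : Set (NonemptyCompacts E)} (h : S ⊆ T) (hT : MeagerIn T F) :
    MeagerIn S F := hT.mono (Set.preimage_mono h)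

lemma meagerIn_iUnion {S : ℕ → Set (NonemptyCompacts E)} {F : Set (NonemptyCompacts E)}
    (h : ∀ n, MeagerIn (S n) F) : MeagerIn (⋃ n, S n) F := by
  unfold MeagerIn
  rw [Set.preimage_iUnion]
  exact isMeagre_iUnion h

/-- `S` is covered by countably many members of `I`. -/
def Cov (I : Set (NonemptyCompacts E)) (S : Set E) : Prop :=
  ∃ f : ℕ → NonemptyCompacts E, (∀ n, f n ∈ I) ∧ S ⊆ ⋃ n, ((f n : Set E))

lemma cov_mono {I : Set (NonemptyCompacts E)} {S T : Set E} (h : S ⊆ T)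
    (hT : Cov I T) : Cov I S := by
  obtain ⟨f, hf, hsub⟩ := hT
  exact ⟨f, hf, h.trans hsub⟩

lemma cov_iUnion {I : Set (NonemptyCompacts E)} (hIne : I.Nonempty) {S : ℕ → Set E}
    (h : ∀ n, Cov I (S n)) : Cov I (⋃ n, S n) := by
  choose f hf hsub using h
  refine ⟨fun k => f (Nat.pairEquiv.symm k).1 (Nat.pairEquiv.symm k).2,
    fun k => hf _ _, ?_⟩
  rintro x hx
  obtain ⟨n, hn⟩ := Set.mem_iUnion.1 hx
  obtain ⟨m, hm⟩ := Set.mem_iUnion.1 (hsub n hn)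
  refine Set.mem_iUnion.2 ⟨Nat.pairEquiv (n, m), ?_⟩
  simpa using hm

lemma cov_sUnion {I : Set (NonemptyCompacts E)} (hIne : I.Nonempty) {T : Set (Set E)}
    (hT : T.Countable) (h : ∀ t ∈ T, Cov I t) : Cov I (⋃₀ T) := by
  rcases T.eq_empty_or_nonempty with rfl | hTne
  · obtain ⟨K, hK⟩ := hIne
    exact ⟨fun _ => K, fun _ => hK, by simp⟩
  · obtain ⟨g, rfl⟩ := hT.exists_eq_range hTne
    rw [Set.sUnion_range]
    exact cov_iUnion hIne fun n => h _ ⟨n, rfl⟩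

/-- If `F` represents the G_δ ideal `I` (with property (*)) on compact sets,
and `G*` is nonmeager in `F` for every nonempty G_δ set `G` that is everywhere big w.r.t.
`I`, then for every G_δ set `G`: `G` is covered by countably many members of `I` iff `G*`
is meager in `F`. -/
theorem stmt_6
    (I : Set (NonemptyCompacts E)) (hIne : I.Nonempty)
    (hIdown : ∀ K ∈ I, ∀ L : NonemptyCompacts E, (L : Set E) ⊆ (K : Set E) → L ∈ I)
    (hIunion : ∀ K ∈ I, ∀ L ∈ I, K ⊔ L ∈ I)
    (hIGδ : IsGδ (I : Set (NonemptyCompacts E)))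
    (hIstar : ∀ f : ℕ → NonemptyCompacts E, (∀ n, f n ∈ I) →
      ∃ G : Set E, IsGδ G ∧ (⋃ n, ((f n : Set E))) ⊆ G ∧
        ∀ K : NonemptyCompacts E, (K : Set E) ⊆ G → K ∈ I)
    (F : Set (NonemptyCompacts E))
    (hchar : ∀ K : NonemptyCompacts E, K ∈ I ↔ MeagerIn (star ((K : Set E))) F)
    (hbig : ∀ G : Set E, IsGδ G → G.Nonempty →
      (∀ U : Set E, IsOpen U → (U ∩ G).Nonempty →
        ¬ ∃ K ∈ I, (K : Set E) = closure (U ∩ G)) →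
      ¬ MeagerIn (star G) F) :
    ∀ G : Set E, IsGδ G →
      ((∃ f : ℕ → NonemptyCompacts E, (∀ n, f n ∈ I) ∧ G ⊆ ⋃ n, ((f n : Set E))) ↔
        MeagerIn (star G) F) := by
  intro G hG
  constructor
  · rintro ⟨f, hf, hsub⟩
    have hss : star G ⊆ ⋃ n, star ((f n : Set E)) := by
      rintro K ⟨x, hxK, hxG⟩
      obtain ⟨n, hn⟩ := Set.mem_iUnion.1 (hsub hxG)
      exact Set.mem_iUnion.2 ⟨n, x, hxK, hn⟩
    exact meagerIn_mono hss (meagerIn_iUnion fun n => (hchar (f n)).1 (hf n))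
  · intro hmeag
    set T : Set (Set E) := {V | IsOpen V ∧ Cov I (V ∩ G)} with hTdef
    set U : Set E := ⋃₀ T with hUdef
    have hUopen : IsOpen U := isOpen_sUnion fun V hV => hV.1
    have hcovGU : Cov I (G ∩ U) := by
      obtain ⟨T', hT'c, hT'sub, hT'eq⟩ :=
        TopologicalSpace.isOpen_sUnion_countable T (fun V hV => hV.1)
      refine cov_mono ?_ (cov_sUnion hIne (T := (fun V => V ∩ G) '' T') (hT'c.image _) ?_)
      · rintro x ⟨hxG, hxU⟩
        rw [hUdef, ← hT'eq] at hxU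
        obtain ⟨V, hV, hxV⟩ := hxU
        exact ⟨V ∩ G, ⟨V, hV, rfl⟩, hxV, hxG⟩
      · rintro t ⟨V, hV, rfl⟩
        exact (hT'sub hV).2
    by_cases hG' : (G \ U) = ∅
    · have hGU : G ⊆ U := Set.diff_eq_empty.1 hG'
      have : G ⊆ G ∩ U := fun x hx => ⟨hx, hGU hx⟩
      exact cov_mono this hcovGU
    · exfalso
      have hne : (G \ U).Nonempty := Set.nonempty_iff_ne_empty.2 hG'
      have hG'Gδ : IsGδ (G \ U) := by
        rw [Set.diff_eq]
        exact hG.inter hUopen.isClosed_compl.isGδ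
      have hstarss : star (G \ U) ⊆ star G := by
        rintro K ⟨x, hxK, hxG⟩
        exact ⟨x, hxK, hxG.1⟩
      refine hbig (G \ U) hG'Gδ hne ?_ (meagerIn_mono hstarss hmeag)
      rintro W hW hWne ⟨K, hK, hKeq⟩
      have hcovW : Cov I (W ∩ G) := by
        refine cov_mono ?_ (show Cov I ((G ∩ U) ∪ (K : Set E)) from ?_)
        · rintro x ⟨hxW, hxG⟩
          by_cases hxU : x ∈ U
          · exact Or.inl ⟨hxG, hxU⟩
          · exact Or.inr (hKeq ▸ subset_closure ⟨hxW, hxG, hxU⟩)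
        · obtain ⟨f, hf, hsub⟩ := hcovGU
          refine ⟨fun n => Nat.rec K (fun m _ => f m) n, fun n => ?_, ?_⟩
          · cases n with
            | zero => exact hK
            | succ m => exact hf m
          · rintro x (hx | hx)
            · obtain ⟨m, hm⟩ := Set.mem_iUnion.1 (hsub hx)
              exact Set.mem_iUnion.2 ⟨m + 1, hm⟩
            · exact Set.mem_iUnion.2 ⟨0, hx⟩
      have hWU : W ⊆ U := fun x hx => ⟨W, ⟨hW, hcovW⟩, hx⟩
      obtain ⟨y, hyW, _, hyU⟩ := hWne
      exact hyU (hWU hyW)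
end

section
/- Let E be a compact Polish space and let I ⊆ K(E) be a nonempty G_δ ideal of compact sets with property (*). Let F ⊆ K(E) be such that for every G_δ set G ⊆ E, G is covered by countably many sets in I if and only if G* is meager in F. Then for every compact K ⊆ E, K ∈ I if and only if K* is meager in F. -/
open TopologicalSpace

variable {E : Type*} [MetricSpace E] [CompactSpace E]

/-- If `F ⊆ K(E)` is such that every G_δ set `G` is covered by countably many
members of the G_δ ideal `I` (with property (*)) iff `G*` is meager in `F`, then `F`
represents `I`: a compact set `K` lies in `I` iff `K*` is meager in `F`. -/
theorem stmt_7
    (I : Set (NonemptyCompacts E)) (hIne : I.Nonempty)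
    (hIdown : ∀ K ∈ I, ∀ L : NonemptyCompacts E, (L : Set E) ⊆ (K : Set E) → L ∈ I)
    (hIunion : ∀ K ∈ I, ∀ L ∈ I, K ⊔ L ∈ I)
    (hIGδ : IsGδ (I : Set (NonemptyCompacts E)))
    (hIstar : ∀ f : ℕ → NonemptyCompacts E, (∀ n, f n ∈ I) →
      ∃ G : Set E, IsGδ G ∧ (⋃ n, ((f n : Set E))) ⊆ G ∧
        ∀ K : NonemptyCompacts E, (K : Set E) ⊆ G → K ∈ I)
    (F : Set (NonemptyCompacts E))
    (hrep : ∀ G : Set E, IsGδ G →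
      ((∃ f : ℕ → NonemptyCompacts E, (∀ n, f n ∈ I) ∧ G ⊆ ⋃ n, ((f n : Set E))) ↔
        MeagerIn (star G) F)) :
    ∀ K : NonemptyCompacts E, K ∈ I ↔ MeagerIn (star ((K : Set E))) F := by
  intro K
  have hKG : IsGδ (K : Set E) := K.isCompact.isClosed.isGδ
  rw [← hrep _ hKG]
  constructor
  · intro hK
    exact ⟨fun _ => K, fun _ => hK, fun x hx => Set.mem_iUnion.2 ⟨0, hx⟩⟩
  · rintro ⟨f, hf, hcov⟩
    obtain ⟨G, -, hGsub, hG⟩ := hIstar f hf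
    exact hG K (hcov.trans hGsub)
end

section
/- Let E be a compact Polish space, let μ be an outer regular Borel measure on E, and for each n ≥ 1 let U_n = {K ∈ K(E) : K ⊆ U for some open U with μ(U) < 1/n}. Then each U_n is open in the Vietoris topology, downward closed, satisfies the condition: for all K ∈ U_n there exists m such that for all L ∈ U_m, K ∪ L ∈ U_n; and ⋂_n U_n equals the family of compact μ-null subsets of E. -/
open TopologicalSpace MeasureTheory

theorem subset_mem_aux {E : Type*} [MetricSpace E]
    {V : Set E} (hV : IsOpen V) :
    IsOpen {K : NonemptyCompacts E | (K : Set E) ⊆ V} := by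
  rw [EMetric.isOpen_iff]
  intro K hK
  obtain ⟨δ, hδ, hsub⟩ := K.isCompact.exists_thickening_subset_open hV hK
  refine ⟨ENNReal.ofReal δ, by simpa using hδ, fun L hL => ?_⟩
  intro y hy
  apply hsub
  rw [Metric.mem_thickening_iff_infEdist_lt]
  calc EMetric.infEdist y (K : Set E) ≤ EMetric.hausdorffEdist (L : Set E) K :=
        EMetric.infEdist_le_hausdorffEdist_of_mem hy
    _ < ENNReal.ofReal δ := hL

/-- For an outer regular Borel measure `μ` on a compact Polish space `E`, the
families `Uₙ = {K ∈ K(E) : K ⊆ U for some open U with μ U < 1/n}` (here indexed so that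
`U n` uses the bound `1/(n+1)`, `n ∈ ℕ`) are open in the Vietoris topology, downward
closed, satisfy the amalgamation condition (for all `K ∈ Uₙ` there is `m` such that for
all `L ∈ Uₘ`, `K ∪ L ∈ Uₙ`), and their intersection is the family of compact `μ`-null
sets. -/
theorem stmt_9 {E : Type*} [MetricSpace E] [CompactSpace E]
    [MeasurableSpace E] [BorelSpace E]
    (μ : Measure E) [μ.OuterRegular]
    (U : ℕ → Set (NonemptyCompacts E))
    (hU : ∀ n : ℕ, U n =
      {K : NonemptyCompacts E | ∃ V : Set E, IsOpen V ∧ (K : Set E) ⊆ V ∧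
        μ V < 1 / ((n : ENNReal) + 1)}) :
    (∀ n, IsOpen (U n)) ∧
    (∀ n, ∀ K ∈ U n, ∀ L : NonemptyCompacts E, (L : Set E) ⊆ (K : Set E) → L ∈ U n) ∧
    (∀ n, ∀ K ∈ U n, ∃ m, ∀ L ∈ U m, K ⊔ L ∈ U n) ∧
    (⋂ n, U n) = {K : NonemptyCompacts E | μ (K : Set E) = 0} := by
  refine ⟨?_, ?_, ?_, ?_⟩
  · intro n
    rw [hU n]
    have : {K : NonemptyCompacts E | ∃ V : Set E, IsOpen V ∧ (K : Set E) ⊆ V ∧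
        μ V < 1 / ((n : ENNReal) + 1)} =
        ⋃ V ∈ {V : Set E | IsOpen V ∧ μ V < 1 / ((n : ENNReal) + 1)},
          {K : NonemptyCompacts E | (K : Set E) ⊆ V} := by
      ext K
      simp only [Set.mem_iUnion, Set.mem_setOf_eq]
      tauto
    rw [this]
    exact isOpen_biUnion fun V hV => subset_mem_aux hV.1
  · intro n K hK L hL
    rw [hU n] at *
    obtain ⟨V, hVo, hKV, hμ⟩ := hK
    exact ⟨V, hVo, hL.trans hKV, hμ⟩
  · intro n K hK
    rw [hU n] at hK
    obtain ⟨V, hVo, hKV, hμ⟩ := hK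
    have hpos : (0 : ENNReal) < 1 / ((n : ENNReal) + 1) - μ V :=
      tsub_pos_iff_lt.mpr hμ
    obtain ⟨m, hm⟩ := ENNReal.exists_inv_nat_lt hpos.ne'
    refine ⟨m, fun L hL => ?_⟩
    rw [hU m] at hL
    obtain ⟨W, hWo, hLW, hμW⟩ := hL
    rw [hU n]
    refine ⟨V ∪ W, hVo.union hWo, ?_, ?_⟩
    · intro x hx
      rcases hx with hx | hx
      · exact Or.inl (hKV hx)
      · exact Or.inr (hLW hx)
    · have hinv : (1 : ENNReal) / ((m : ENNReal) + 1) ≤ (m : ENNReal)⁻¹ := by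
        rw [one_div]
        exact ENNReal.inv_le_inv.mpr le_self_add
      calc μ (V ∪ W) ≤ μ V + μ W := measure_union_le _ _
        _ < μ V + (1 / ((n : ENNReal) + 1) - μ V) :=
            ENNReal.add_lt_add_left (ne_top_of_lt hμ)
              (lt_of_lt_of_le hμW (hinv.trans hm.le))
        _ = 1 / ((n : ENNReal) + 1) := add_tsub_cancel_of_le hμ.le
  · ext K
    simp only [Set.mem_iInter, Set.mem_setOf_eq]
    constructor
    · intro h
      by_contra hne
      obtain ⟨n, hn⟩ := ENNReal.exists_inv_nat_lt hne
      have hK := h n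
      rw [hU n] at hK
      obtain ⟨V, hVo, hKV, hμ⟩ := hK
      have h1 : μ (K : Set E) ≤ μ V := measure_mono hKV
      have h2 : (1 : ENNReal) / ((n : ENNReal) + 1) ≤ (n : ENNReal)⁻¹ := by
        rw [one_div]
        exact ENNReal.inv_le_inv.mpr le_self_add
      exact absurd (h1.trans_lt (hμ.trans_le h2)) hn.asymm
    · intro h n
      rw [hU n]
      have hlt : μ (K : Set E) < 1 / ((n : ENNReal) + 1) := by
        rw [h]
        simp [ENNReal.div_pos_iff]
      obtain ⟨V, hKV, hVo, hμ⟩ := (K : Set E).exists_isOpen_lt_of_lt _ hlt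
      exact ⟨V, hVo, hKV, hμ⟩
end

section
/- Let E be a compact Polish space and let I ⊆ K(E) be a nonempty family of compact sets such that there exists a decreasing sequence of open, downward closed sets U_n ⊆ K(E) with I = ⋂_n U_n and satisfying: for all n and all K ∈ U_n there exists m such that for all L ∈ U_m, K ∪ L ∈ U_n. Then I is a G_δ σ-ideal of compact sets. -/
open TopologicalSpace

/-- Auxiliary: in a compact metric space, an open set of nonempty compacts containing `s`
contains a positive closed thickening of `s`, which also contains an open thickening. -/
lemma stmt_10_key {E : Type*} [MetricSpace E] [CompactSpace E]
    {Up : Set (NonemptyCompacts E)} (hop : IsOpen Up)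
    (s : NonemptyCompacts E) (hs : s ∈ Up) :
    ∃ δ > 0, ∃ V : NonemptyCompacts E,
      Metric.thickening δ (s : Set E) ⊆ (V : Set E) ∧ V ∈ Up := by
  obtain ⟨ε, hε, hball⟩ := Metric.isOpen_iff.1 hop s hs
  have hε2 : (0:ℝ) < ε / 2 := by positivity
  refine ⟨ε / 2, hε2, ⟨⟨Metric.cthickening (ε/2) (s : Set E),
      Metric.isClosed_cthickening.isCompact⟩,
      s.nonempty.mono (Metric.self_subset_cthickening _)⟩,
      Metric.thickening_subset_cthickening _ _, ?_⟩
  apply hball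
  rw [Metric.mem_ball]
  have hdle : Metric.hausdorffDist (Metric.cthickening (ε/2) (s : Set E)) (s : Set E) ≤ ε / 2 := by
    apply Metric.hausdorffDist_le_of_infDist hε2.le
    · intro x hx
      rw [Metric.mem_cthickening_iff] at hx
      exact ENNReal.toReal_le_of_le_ofReal hε2.le hx
    · intro x hx
      rw [Metric.infDist_zero_of_mem (Metric.self_subset_cthickening _ hx)]
      exact hε2.le
  calc dist (⟨⟨Metric.cthickening (ε/2) (s : Set E),
        Metric.isClosed_cthickening.isCompact⟩,
        s.nonempty.mono (Metric.self_subset_cthickening _)⟩ : NonemptyCompacts E) s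
      = Metric.hausdorffDist (Metric.cthickening (ε/2) (s : Set E)) (s : Set E) :=
        Metric.NonemptyCompacts.dist_eq
    _ ≤ ε / 2 := hdle
    _ < ε := by linarith

/-- A nonempty family `I` of compact sets that is the intersection of a
decreasing sequence of open downward closed sets `Uₙ` satisfying the amalgamation
condition is a G_δ σ-ideal of compact sets. -/
theorem stmt_10 {E : Type*} [MetricSpace E] [CompactSpace E]
    (I : Set (NonemptyCompacts E)) (hIne : I.Nonempty)
    (U : ℕ → Set (NonemptyCompacts E))
    (hdec : Antitone U)
    (hopen : ∀ n, IsOpen (U n))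
    (hdown : ∀ n, ∀ K ∈ U n, ∀ L : NonemptyCompacts E, (L : Set E) ⊆ (K : Set E) → L ∈ U n)
    (hI : I = ⋂ n, U n)
    (hamalg : ∀ n, ∀ K ∈ U n, ∃ m, ∀ L ∈ U m, K ⊔ L ∈ U n) :
    IsGδ I ∧
    (∀ K ∈ I, ∀ L : NonemptyCompacts E, (L : Set E) ⊆ (K : Set E) → L ∈ I) ∧
    (∀ K ∈ I, ∀ L ∈ I, K ⊔ L ∈ I) ∧
    (∀ f : ℕ → NonemptyCompacts E, (∀ n, f n ∈ I) →
      ∀ K : NonemptyCompacts E, (K : Set E) = ⋃ n, ((f n : Set E)) → K ∈ I) := by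
  have hmem : ∀ K : NonemptyCompacts E, K ∈ I ↔ ∀ n, K ∈ U n := by
    intro K; rw [hI]; exact Set.mem_iInter
  have hGδ : IsGδ I := hI ▸ IsGδ.iInter fun n => (hopen n).isGδ
  have hdownI : ∀ K ∈ I, ∀ L : NonemptyCompacts E, (L : Set E) ⊆ (K : Set E) → L ∈ I := by
    intro K hK L hL
    rw [hmem] at hK ⊢
    exact fun n => hdown n K (hK n) L hL
  have hsup : ∀ K ∈ I, ∀ L ∈ I, K ⊔ L ∈ I := by
    intro K hK L hL
    rw [hmem] at hK hL ⊢
    intro n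
    obtain ⟨m, hm⟩ := hamalg n K (hK n)
    exact hm L (hL m)
  refine ⟨hGδ, hdownI, hsup, ?_⟩
  intro f hf K hK
  -- partial unions
  set g : ℕ → NonemptyCompacts E := fun j => Nat.rec (f 0) (fun j gj => gj ⊔ f (j + 1)) j
    with hg_def
  have hgs : ∀ j, g (j + 1) = g j ⊔ f (j + 1) := fun j => rfl
  have hgI : ∀ j, g j ∈ I := by
    intro j
    induction j with
    | zero => exact hf 0
    | succ j ih => exact hsup _ ih _ (hf (j + 1))
  have hgU : ∀ p j, g j ∈ U p := fun p j => (hmem _).1 (hgI j) p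
  have hfg : ∀ j, (f j : Set E) ⊆ (g j : Set E) := by
    intro j
    cases j with
    | zero => exact subset_rfl
    | succ j =>
      rw [hgs j, NonemptyCompacts.coe_sup]
      exact Set.subset_union_right
  -- key choices
  have key : ∀ p j, ∃ δ > 0, ∃ V : NonemptyCompacts E,
      Metric.thickening δ (g j : Set E) ⊆ (V : Set E) ∧ V ∈ U p :=
    fun p j => stmt_10_key (hopen p) (g j) (hgU p j)
  choose δ hδ V hVsub hVU using key
  have amalg' : ∀ p j, ∃ m, ∀ L ∈ U m, V p j ⊔ L ∈ U p :=
    fun p j => hamalg p (V p j) (hVU p j)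
  choose M hM using amalg'
  rw [hmem]
  intro n
  -- chain of indices
  set m : ℕ → ℕ := fun j => Nat.rec n (fun j mj => M mj j) j with hm_def
  have hm0 : m 0 = n := rfl
  have hms : ∀ j, m (j + 1) = M (m j) j := fun j => rfl
  -- partial unions of thickenings
  set W : ℕ → NonemptyCompacts E :=
    fun j => Nat.rec (V (m 0) 0) (fun j Wj => Wj ⊔ V (m (j + 1)) (j + 1)) j with hW_def
  have hWs : ∀ j, W (j + 1) = W j ⊔ V (m (j + 1)) (j + 1) := fun j => rfl
  -- the chain property
  have chain : ∀ j, ∀ L ∈ U (m (j + 1)), W j ⊔ L ∈ U n := by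
    intro j
    induction j with
    | zero =>
      intro L hL
      exact hM (m 0) 0 L hL
    | succ j ih =>
      intro L hL
      have h1 : V (m (j + 1)) (j + 1) ⊔ L ∈ U (m (j + 1)) := hM (m (j + 1)) (j + 1) L hL
      have h2 := ih _ h1
      rw [hWs j, sup_assoc]
      exact h2
  -- covering K by thickenings
  have hcover : (K : Set E) ⊆ ⋃ j, Metric.thickening (δ (m j) j) (g j : Set E) := by
    intro x hx
    rw [hK] at hx
    obtain ⟨i, hi⟩ := Set.mem_iUnion.1 hx
    exact Set.mem_iUnion.2 ⟨i, Metric.self_subset_thickening (hδ (m i) i) _ (hfg i hi)⟩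
  obtain ⟨t, ht⟩ := K.isCompact.elim_finite_subcover
    (fun j => Metric.thickening (δ (m j) j) (g j : Set E))
    (fun j => Metric.isOpen_thickening) hcover
  set J := t.sup id with hJ_def
  -- V (m i) i ⊆ W j for i ≤ j
  have hVWi : ∀ i, (V (m i) i : Set E) ⊆ (W i : Set E) := by
    intro i
    cases i with
    | zero => exact subset_rfl
    | succ i =>
      rw [hWs i, NonemptyCompacts.coe_sup]
      exact Set.subset_union_right
  have hWmono : ∀ j, (W j : Set E) ⊆ (W (j + 1) : Set E) := by
    intro j
    rw [hWs j, NonemptyCompacts.coe_sup]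
    exact Set.subset_union_left
  have hVW : ∀ i j, i ≤ j → (V (m i) i : Set E) ⊆ (W j : Set E) := by
    intro i j hij
    induction j with
    | zero =>
      have : i = 0 := Nat.le_zero.1 hij
      subst this
      exact hVWi 0
    | succ j ih =>
      rcases Nat.lt_or_ge i (j + 1) with h | h
      · exact (ih (Nat.lt_succ_iff.1 h)).trans (hWmono j)
      · have : i = j + 1 := le_antisymm hij h
        subst this
        exact hVWi (j + 1)
  -- K ⊆ W J
  have hKW : (K : Set E) ⊆ (W J : Set E) := by
    intro x hx
    obtain ⟨i, hit, hxi⟩ := Set.mem_iUnion₂.1 (ht hx)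
    have hiJ : i ≤ J := Finset.le_sup (f := id) hit
    exact hVW i J hiJ (hVsub (m i) i hxi)
  -- conclude
  have hfin : W J ⊔ g (J + 1) ∈ U n := chain J (g (J + 1)) (hgU (m (J + 1)) (J + 1))
  apply hdown n _ hfin K
  rw [NonemptyCompacts.coe_sup]
  exact hKW.trans Set.subset_union_left
end

section
/- Let X be a Polish space (or more generally a nonempty topological space) and let A ⊆ X. Then A is comeager in X if and only if Player II has a winning strategy in the Banach–Mazur game on A: players alternately choose nonempty open sets V_0 ⊇ W_0 ⊇ V_1 ⊇ W_1 ⊇ …, Player I choosing the V_n and Player II the W_n, and Player II wins if ⋂_n W_n ⊆ A. -/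
open Set
set_option linter.unusedSectionVars false
set_option maxHeartbeats 1000000

namespace BM15
variable {X : Type*} [TopologicalSpace X]

def Legal (σ : List (Set X) → Set X) (l : List (Set X)) : Prop :=
  (∀ i, (h : i < l.length) → IsOpen l[i] ∧ l[i].Nonempty) ∧
  (∀ i, (h : i + 1 < l.length) → l[i + 1] ⊆ σ (l.take (i + 1)))

lemma legal_nil (σ : List (Set X) → Set X) : Legal σ [] :=
  ⟨fun i h => by simp at h, fun i h => by simp at h⟩

/-- The open set Player I must move inside of, after position `p`. -/
def pw (σ : List (Set X) → Set X) : List (Set X) → Set X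
  | [] => univ
  | a :: l => σ (a :: l)

lemma pw_ne (σ : List (Set X) → Set X) {p : List (Set X)} (h : p ≠ []) : pw σ p = σ p := by
  cases p with
  | nil => exact absurd rfl h
  | cons a l => rfl

lemma ofFn_getD (l : List (Set X)) {m : ℕ} (hm : m ≤ l.length) :
    (List.ofFn fun j : Fin m => l.getD j ∅) = l.take m := by
  apply List.ext_getElem
  · simp [Nat.min_eq_left hm]
  · intro i h1 h2
    have hi : i < l.length := lt_of_lt_of_le (by simpa using h1) hm
    simp [List.getElem_ofFn, List.getD_eq_getElem, hi, List.getElem_take]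

lemma step {σ : List (Set X) → Set X}
    (Hgood : ∀ V : ℕ → Set X, ∀ n : ℕ,
      ((∀ i ≤ n, IsOpen (V i) ∧ (V i).Nonempty) ∧
        (∀ i < n, V (i + 1) ⊆ σ (List.ofFn fun j : Fin (i + 1) => V j))) →
      (IsOpen (σ (List.ofFn fun j : Fin (n + 1) => V j)) ∧
        (σ (List.ofFn fun j : Fin (n + 1) => V j)).Nonempty ∧
        σ (List.ofFn fun j : Fin (n + 1) => V j) ⊆ V n))
    {l : List (Set X)} (hl : Legal σ l) {n : ℕ} (hlen : l.length = n + 1) :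
    IsOpen (σ l) ∧ (σ l).Nonempty ∧ σ l ⊆ l.getD n ∅ := by
  set V : ℕ → Set X := fun i => l.getD (min i n) ∅ with hV
  have key : ∀ m ≤ n + 1, (List.ofFn fun j : Fin m => V j) = l.take m := by
    intro m hm
    rw [show (fun j : Fin m => V j) = fun j : Fin m => l.getD j ∅ from ?_]
    · exact ofFn_getD l (by omega)
    · funext j
      have : min (j : ℕ) n = j := Nat.min_eq_left (by omega)
      simp [hV, this]
  have hleg : (∀ i ≤ n, IsOpen (V i) ∧ (V i).Nonempty) ∧
      (∀ i < n, V (i + 1) ⊆ σ (List.ofFn fun j : Fin (i + 1) => V j)) := by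
    constructor
    · intro i hi
      have hi' : i < l.length := by omega
      have : V i = l[i] := by simp [hV, Nat.min_eq_left hi, List.getD_eq_getElem, hi']
      rw [this]; exact hl.1 i hi'
    · intro i hi
      have hi' : i + 1 < l.length := by omega
      have h1 : V (i + 1) = l[i + 1] := by
        simp [hV, Nat.min_eq_left (by omega : i + 1 ≤ n), List.getD_eq_getElem, hi']
      rw [h1, key (i + 1) (by omega)]
      exact hl.2 i hi'
  have := Hgood V n hleg
  rw [key (n + 1) le_rfl, List.take_of_length_le (by omega)] at this
  have hVn : V n = l.getD n ∅ := by simp [hV]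
  exact ⟨this.1, this.2.1, hVn ▸ this.2.2⟩

lemma legal_append {σ : List (Set X) → Set X} {p : List (Set X)} (hp : Legal σ p)
    {V : Set X} (hVo : IsOpen V) (hVne : V.Nonempty) (hVsub : V ⊆ pw σ p) :
    Legal σ (p ++ [V]) := by
  have hlen : (p ++ [V]).length = p.length + 1 := by simp
  constructor
  · intro i h
    rw [hlen] at h
    rcases lt_or_eq_of_le (Nat.lt_succ_iff.1 h) with h' | h'
    · rw [List.getElem_append_left h']
      exact hp.1 i h'
    · subst h'
      simp
      exact ⟨hVo, hVne⟩
  · intro i h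
    rw [hlen] at h
    have hi : i + 1 ≤ p.length := by omega
    have htake : (p ++ [V]).take (i + 1) = p.take (i + 1) :=
      List.take_append_of_le_length hi
    rcases lt_or_eq_of_le hi with h' | h'
    · rw [List.getElem_append_left h', htake]
      exact hp.2 i h'
    · have hpne : p ≠ [] := by intro hh; rw [hh] at h'; simp at h'
      have : (p ++ [V])[i + 1] = V := List.getElem_concat_length (l := p) (a := V) (i := i + 1) h' _
      rw [this, htake, h', List.take_length, ← pw_ne σ hpne]
      exact hVsub

lemma exists_maxfam {σ : List (Set X) → Set X}
    (Hstep : ∀ {l : List (Set X)}, Legal σ l → ∀ {n : ℕ}, l.length = n + 1 →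
      IsOpen (σ l) ∧ (σ l).Nonempty ∧ σ l ⊆ l.getD n ∅)
    {p : List (Set X)} (hp : Legal σ p) :
    ∃ S : Set (List (Set X)),
      (∀ l ∈ S, ∃ V : Set X, IsOpen V ∧ V.Nonempty ∧ V ⊆ pw σ p ∧ l = p ++ [V]) ∧
      (S.Pairwise fun l l' => Disjoint (σ l) (σ l')) ∧
      (∀ O : Set X, IsOpen O → (O ∩ pw σ p).Nonempty → ∃ l ∈ S, (O ∩ σ l).Nonempty) := by
  set Ext : Set (List (Set X)) :=
    {l | ∃ V : Set X, IsOpen V ∧ V.Nonempty ∧ V ⊆ pw σ p ∧ l = p ++ [V]} with hExt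
  have hExtLegal : ∀ l ∈ Ext, Legal σ l ∧ σ l ⊆ l.getD p.length ∅ ∧ (σ l).Nonempty := by
    intro l hl
    obtain ⟨V, hVo, hVne, hVsub, rfl⟩ := hl
    have hleg := legal_append hp hVo hVne hVsub
    have hlen : (p ++ [V]).length = p.length + 1 := by simp
    obtain ⟨h1, h2, h3⟩ := Hstep hleg hlen
    exact ⟨hleg, h3, h2⟩
  have hchainub : ∀ c ⊆ {S | S ⊆ Ext ∧ S.Pairwise fun l l' => Disjoint (σ l) (σ l')},
      IsChain (· ⊆ ·) c → ∃ ub ∈ {S | S ⊆ Ext ∧ S.Pairwise fun l l' => Disjoint (σ l) (σ l')},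
        ∀ s ∈ c, s ⊆ ub := by
    intro c hc hchain
    refine ⟨⋃₀ c, ⟨?_, ?_⟩, fun s hs => subset_sUnion_of_mem hs⟩
    · exact sUnion_subset fun s hs => (hc hs).1
    · intro l hl l' hl' hne
      obtain ⟨s, hs, hls⟩ := hl
      obtain ⟨s', hs', hls'⟩ := hl'
      rcases hchain.total hs hs' with h | h
      · exact (hc hs').2 (h hls) hls' hne
      · exact (hc hs).2 hls (h hls') hne
  obtain ⟨M, hM⟩ := zorn_subset
      {S | S ⊆ Ext ∧ S.Pairwise fun l l' => Disjoint (σ l) (σ l')} hchainub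
  obtain ⟨⟨hMExt, hMdisj⟩, hMmax⟩ := hM
  refine ⟨M, fun l hl => hMExt hl, hMdisj, ?_⟩
  intro O hOo hOne
  set V₀ : Set X := O ∩ pw σ p with hV₀
  have hV₀o : IsOpen V₀ := by
    rcases eq_or_ne p [] with rfl | hpne
    · simpa only [hV₀, pw, inter_univ] using hOo
    · rw [hV₀, pw_ne σ hpne]
      have hplen : p.length = (p.length - 1) + 1 := by
        cases p with
        | nil => exact absurd rfl hpne
        | cons a l => simp
      exact hOo.inter (Hstep hp hplen).1
  set l₀ : List (Set X) := p ++ [V₀] with hl₀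
  have hl₀Ext : l₀ ∈ Ext := ⟨V₀, hV₀o, hOne, inter_subset_right, rfl⟩
  obtain ⟨hleg₀, hsub₀, hne₀⟩ := hExtLegal l₀ hl₀Ext
  have hsub₀' : σ l₀ ⊆ O := by
    refine hsub₀.trans ?_
    have : l₀.getD p.length ∅ = V₀ := by simp [hl₀]
    rw [this]
    exact inter_subset_left
  by_cases hmeet : ∃ l ∈ M, (σ l ∩ σ l₀).Nonempty
  · obtain ⟨l, hlM, y, hy1, hy2⟩ := hmeet
    exact ⟨l, hlM, y, hsub₀' hy2, hy1⟩
  · push_neg at hmeet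
    have hins : insert l₀ M ∈
        {S | S ⊆ Ext ∧ S.Pairwise fun l l' => Disjoint (σ l) (σ l')} := by
      constructor
      · exact insert_subset hl₀Ext hMExt
      · intro l hl l' hl' hne
        rcases hl with rfl | hl <;> rcases hl' with rfl | hl'
        · exact absurd rfl hne
        · exact (disjoint_iff_inter_eq_empty.2 (hmeet l' hl')).symm
        · exact disjoint_iff_inter_eq_empty.2 (hmeet l hl)
        · exact hMdisj hl hl' hne
    have hmem : l₀ ∈ M := (hMmax hins (subset_insert _ _)) (mem_insert _ _)
    exact ⟨l₀, hmem, hne₀.mono (subset_inter hsub₀' subset_rfl)⟩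

def levels (F : List (Set X) → Set (List (Set X))) : ℕ → Set (List (Set X))
  | 0 => F []
  | n + 1 => ⋃ p ∈ levels F n, F p

lemma ofFn_eval (V : ℕ → Set X) (n : ℕ) :
    (List.ofFn fun j : Fin (n + 1) => V j).length - 1 = n ∧
    (List.ofFn fun j : Fin (n + 1) => V j).getD n ∅ = V n := by
  refine ⟨by simp, ?_⟩
  rw [List.getD_eq_getElem _ _ (by simp), List.getElem_ofFn]

end BM15

open BM15

/-- Banach–Mazur game: In a nonempty topological space `X`, a set `A` is
comeager iff Player II has a winning strategy in the Banach–Mazur game on `A`. A strategy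
for II is a function `σ` from finite sequences of Player I's moves to II's next move;
against I's moves `V 0, V 1, …` II plays `W n = σ [V 0, …, V n]`. The strategy is winning
if II's moves are legal (nonempty open subsets of I's preceding move) as long as I has
played legally so far, and whenever the whole run is legal, `⋂ₙ W n ⊆ A`. -/
theorem stmt_15 {X : Type*} [TopologicalSpace X] [Nonempty X] (A : Set X) :
    IsMeagre Aᶜ ↔
      ∃ σ : List (Set X) → Set X,
        ∀ V : ℕ → Set X,
          (∀ n : ℕ,
            ((∀ i ≤ n, IsOpen (V i) ∧ (V i).Nonempty) ∧
              (∀ i < n, V (i + 1) ⊆ σ (List.ofFn fun j : Fin (i + 1) => V j))) →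
            (IsOpen (σ (List.ofFn fun j : Fin (n + 1) => V j)) ∧
              (σ (List.ofFn fun j : Fin (n + 1) => V j)).Nonempty ∧
              σ (List.ofFn fun j : Fin (n + 1) => V j) ⊆ V n)) ∧
          (((∀ n, IsOpen (V n) ∧ (V n).Nonempty) ∧
              (∀ n, V (n + 1) ⊆ σ (List.ofFn fun j : Fin (n + 1) => V j))) →
            (⋂ n, σ (List.ofFn fun j : Fin (n + 1) => V j)) ⊆ A) := by
  constructor
  · -- comeager ⇒ winning strategy
    intro hA
    have hA' : A ∈ residual X := by rwa [IsMeagre, compl_compl] at hA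
    obtain ⟨S, hSo, hSd, hSc, hSsub⟩ := mem_residual_iff.1 hA'
    obtain ⟨f, hf⟩ := (hSc.insert univ).exists_eq_range (insert_nonempty _ _)
    have hmem : ∀ n, f n ∈ insert univ S := fun n => hf ▸ mem_range_self n
    have hfo : ∀ n, IsOpen (f n) := fun n => by
      rcases hmem n with h | h
      · rw [h]; exact isOpen_univ
      · exact hSo _ h
    have hfd : ∀ n, Dense (f n) := fun n => by
      rcases hmem n with h | h
      · rw [h]; exact dense_univ
      · exact hSd _ h
    have hsub : (⋂ n, f n) ⊆ A := by
      intro x hx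
      apply hSsub
      intro t ht
      have ht' : t ∈ insert univ S := mem_insert_of_mem _ ht
      rw [hf] at ht'
      obtain ⟨n, rfl⟩ := ht'
      exact mem_iInter.1 hx n
    set σ : List (Set X) → Set X :=
      fun l => interior (l.getD (l.length - 1) ∅) ∩ f (l.length - 1) with hσ
    have hσval : ∀ (V : ℕ → Set X) (n : ℕ),
        σ (List.ofFn fun j : Fin (n + 1) => V j) = interior (V n) ∩ f n := by
      intro V n
      obtain ⟨h1, h2⟩ := ofFn_eval V n
      rw [hσ]
      simp only [h1, h2]
    refine ⟨σ, fun V => ⟨?_, ?_⟩⟩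
    · intro n ⟨h1, _⟩
      obtain ⟨hVo, hVne⟩ := h1 n le_rfl
      rw [hσval V n, hVo.interior_eq]
      exact ⟨hVo.inter (hfo n), (hfd n).inter_open_nonempty _ hVo hVne,
        inter_subset_left⟩
    · intro _ x hx
      apply hsub
      refine mem_iInter.2 fun n => ?_
      have := mem_iInter.1 hx n
      rw [hσval V n] at this
      exact this.2
  · -- winning strategy ⇒ comeager
    rintro ⟨σ, Hσ⟩
    have Hgood : ∀ V : ℕ → Set X, ∀ n : ℕ,
        ((∀ i ≤ n, IsOpen (V i) ∧ (V i).Nonempty) ∧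
          (∀ i < n, V (i + 1) ⊆ σ (List.ofFn fun j : Fin (i + 1) => V j))) →
        (IsOpen (σ (List.ofFn fun j : Fin (n + 1) => V j)) ∧
          (σ (List.ofFn fun j : Fin (n + 1) => V j)).Nonempty ∧
          σ (List.ofFn fun j : Fin (n + 1) => V j) ⊆ V n) := fun V => (Hσ V).1
    have Hstep : ∀ {l : List (Set X)}, Legal σ l → ∀ {n : ℕ}, l.length = n + 1 →
        IsOpen (σ l) ∧ (σ l).Nonempty ∧ σ l ⊆ l.getD n ∅ := by
      intro l hl n hlen
      exact step Hgood hl hlen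
    have hF' : ∀ p : List (Set X), ∃ S : Set (List (Set X)), Legal σ p →
        ((∀ l ∈ S, ∃ V : Set X, IsOpen V ∧ V.Nonempty ∧ V ⊆ pw σ p ∧ l = p ++ [V]) ∧
        (S.Pairwise fun l l' => Disjoint (σ l) (σ l')) ∧
        (∀ O : Set X, IsOpen O → (O ∩ pw σ p).Nonempty → ∃ l ∈ S, (O ∩ σ l).Nonempty)) := by
      intro p
      by_cases h : Legal σ p
      · obtain ⟨S, h1, h2, h3⟩ := exists_maxfam @Hstep h
        exact ⟨S, fun _ => ⟨h1, h2, h3⟩⟩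
      · exact ⟨∅, fun hh => absurd hh h⟩
    choose F hF using hF'
    set D : ℕ → Set (List (Set X)) := levels F with hD
    have hD0 : D 0 = F [] := rfl
    have hDsucc : ∀ n, D (n + 1) = ⋃ p ∈ D n, F p := fun n => rfl
    -- basic facts about one step of the construction
    have hchild : ∀ p, Legal σ p → ∀ l ∈ F p, ∃ V : Set X,
        l = p ++ [V] ∧ Legal σ l ∧ l.length = p.length + 1 ∧ σ l ⊆ V ∧ V ⊆ pw σ p := by
      intro p hp l hl
      obtain ⟨V, hVo, hVne, hVsub, rfl⟩ := (hF p hp).1 l hl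
      have hleg := legal_append hp hVo hVne hVsub
      have hlen : (p ++ [V]).length = p.length + 1 := by simp
      refine ⟨V, rfl, hleg, hlen, ?_, hVsub⟩
      have h3 := (Hstep hleg hlen).2.2
      have : (p ++ [V]).getD p.length ∅ = V := by simp
      rwa [this] at h3
    have hInv : ∀ n, (∀ l ∈ D n, Legal σ l ∧ l.length = n + 1) ∧
        ((D n).Pairwise fun l l' => Disjoint (σ l) (σ l')) ∧
        (∀ O : Set X, IsOpen O → O.Nonempty → ∃ l ∈ D n, (O ∩ σ l).Nonempty) := by
      intro n
      induction n with
      | zero =>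
        obtain ⟨hExt, hdisj, hdens⟩ := hF [] (legal_nil σ)
        refine ⟨?_, hdisj, ?_⟩
        · intro l hl
          obtain ⟨V, hEq, hleg, hlen, _, _⟩ := hchild [] (legal_nil σ) l hl
          exact ⟨hleg, by rw [hEq]; simp⟩
        · intro O hOo hOne
          exact hdens O hOo (by simpa [pw] using hOne)
      | succ n ih =>
        obtain ⟨ihLen, ihDisj, ihDens⟩ := ih
        have hmem' : ∀ l, l ∈ D (n + 1) ↔ ∃ p ∈ D n, l ∈ F p := by
          intro l; rw [hDsucc n]; simp
        have hpne : ∀ p ∈ D n, p ≠ [] := by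
          intro p hp hh
          have := (ihLen p hp).2
          rw [hh] at this; simp at this
        have hsubparent : ∀ p ∈ D n, ∀ l ∈ F p, σ l ⊆ σ p ∧ Legal σ l ∧
            l.length = n + 2 := by
          intro p hp l hl
          obtain ⟨V, hEq, hleg, hlen, hsub, hVsub⟩ :=
            hchild p (ihLen p hp).1 l hl
          rw [pw_ne σ (hpne p hp)] at hVsub
          exact ⟨hsub.trans hVsub, hleg, by rw [hlen, (ihLen p hp).2]⟩
        have hparent_unique : ∀ p ∈ D n, ∀ p' ∈ D n, ∀ l, l ∈ F p → l ∈ F p' → p = p' := by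
          intro p hp p' hp' l hl hl'
          obtain ⟨V, hEq, _, _, _, _⟩ := hchild p (ihLen p hp).1 l hl
          obtain ⟨V', hEq', _, _, _, _⟩ := hchild p' (ihLen p' hp').1 l hl'
          have h1 : p = l.take (n + 1) := by
            rw [hEq, ← (ihLen p hp).2]
            exact (List.take_left (l₁ := p) (l₂ := [V])).symm
          have h2 : p' = l.take (n + 1) := by
            rw [hEq', ← (ihLen p' hp').2]
            exact (List.take_left (l₁ := p') (l₂ := [V'])).symm
          rw [h1, h2]
        refine ⟨?_, ?_, ?_⟩
        · intro l hl
          obtain ⟨p, hp, hlF⟩ := (hmem' l).1 hl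
          obtain ⟨_, hleg, hlen⟩ := hsubparent p hp l hlF
          exact ⟨hleg, hlen⟩
        · intro l hl l' hl' hne
          obtain ⟨p, hp, hlF⟩ := (hmem' l).1 hl
          obtain ⟨p', hp', hlF'⟩ := (hmem' l').1 hl'
          rcases eq_or_ne p p' with rfl | hpp'
          · exact (hF p (ihLen p hp).1).2.1 hlF hlF' hne
          · exact ((ihDisj hp hp' hpp').mono (hsubparent p hp l hlF).1
              (hsubparent p' hp' l' hlF').1)
        · intro O hOo hOne
          obtain ⟨p, hp, hOp⟩ := ihDens O hOo hOne
          have hOp' : (O ∩ pw σ p).Nonempty := by rwa [pw_ne σ (hpne p hp)]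
          obtain ⟨l, hlF, hOl⟩ := (hF p (ihLen p hp).1).2.2 O hOo hOp'
          exact ⟨l, (hmem' l).2 ⟨p, hp, hlF⟩, hOl⟩
    set U : ℕ → Set X := fun n => ⋃ l ∈ D n, σ l with hU
    have hUo : ∀ n, IsOpen (U n) := by
      intro n
      refine isOpen_biUnion fun l hl => ?_
      obtain ⟨hleg, hlen⟩ := (hInv n).1 l hl
      exact (Hstep hleg hlen).1
    have hUd : ∀ n, Dense (U n) := by
      intro n
      rw [dense_iff_inter_open]
      intro O hOo hOne
      obtain ⟨l, hl, x, hx1, hx2⟩ := (hInv n).2.2 O hOo hOne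
      exact ⟨x, hx1, mem_biUnion hl hx2⟩
    rw [IsMeagre, compl_compl]
    refine mem_residual_iff.2 ⟨range U, ?_, ?_, countable_range U, ?_⟩
    · rintro t ⟨n, rfl⟩; exact hUo n
    · rintro t ⟨n, rfl⟩; exact hUd n
    · rw [sInter_range]
      intro x hx
      have hsel : ∀ n, ∃ l, l ∈ D n ∧ x ∈ σ l := by
        intro n
        have := mem_iInter.1 hx n
        rw [hU] at this
        obtain ⟨l, hl, hxl⟩ := mem_iUnion₂.1 this
        exact ⟨l, hl, hxl⟩
      choose L hLD hxL using hsel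
      -- coherence of the branch
      have hcoh : ∀ n, L (n + 1) = L n ++ [(L (n + 1)).getD (n + 1) ∅] ∧
          (L (n + 1)).getD (n + 1) ∅ ⊆ σ (L n) := by
        intro n
        have hmem' : L (n + 1) ∈ ⋃ p ∈ D n, F p := by
          rw [← hDsucc n]; exact hLD (n + 1)
        obtain ⟨p, hp, hlF⟩ := mem_iUnion₂.1 hmem'
        have hpne : p ≠ [] := by
          intro hh
          have := ((hInv n).1 p hp).2
          rw [hh] at this; simp at this
        obtain ⟨V, hEq, hleg, hlen, hsub, hVsub⟩ :=
          hchild p ((hInv n).1 p hp).1 (L (n + 1)) hlF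
        rw [pw_ne σ hpne] at hVsub
        have hxp : x ∈ σ p := hVsub (hsub (hxL (n + 1)))
        have hpL : p = L n := by
          by_contra hne
          exact Set.disjoint_left.1 ((hInv n).2.1 hp (hLD n) hne) hxp (hxL n)
        have hplen : p.length = n + 1 := ((hInv n).1 p hp).2
        have hgetD : (L (n + 1)).getD (n + 1) ∅ = V := by
          rw [hEq, ← hplen]; simp
        rw [hgetD]
        exact ⟨by rw [hEq, hpL], hpL ▸ hVsub⟩
      set Vr : ℕ → Set X := fun n => (L n).getD n ∅ with hVr
      have hofFn : ∀ n, (List.ofFn fun j : Fin (n + 1) => Vr j) = L n := by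
        intro n
        induction n with
        | zero =>
          obtain ⟨V, hEq, _, _, _, _⟩ := hchild [] (legal_nil σ) (L 0) (hLD 0)
          have hEq' : L 0 = [V] := by simpa using hEq
          rw [List.ofFn_succ, List.ofFn_zero, hEq']
          simp [hVr, hEq']
        | succ n ih =>
          obtain ⟨hEq, _⟩ := hcoh n
          rw [List.ofFn_succ']
          simp only [Fin.coe_castSucc, Fin.val_last, List.concat_eq_append]
          rw [ih]
          exact hEq.symm
      have h1 : ∀ n, IsOpen (Vr n) ∧ (Vr n).Nonempty := by
        intro n
        obtain ⟨hleg, hlen⟩ := (hInv n).1 (L n) (hLD n)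
        have hn : n < (L n).length := by omega
        have : Vr n = (L n)[n] := List.getD_eq_getElem _ _ hn
        rw [this]
        exact hleg.1 n hn
      have h2 : ∀ n, Vr (n + 1) ⊆ σ (List.ofFn fun j : Fin (n + 1) => Vr j) := by
        intro n
        rw [hofFn n]
        exact (hcoh n).2
      have hwin := (Hσ Vr).2 ⟨h1, h2⟩
      apply hwin
      refine mem_iInter.2 fun n => ?_
      rw [hofFn n]
      exact hxL n
end

section
/- Let E be a compact Polish space, I ⊆ K(E) a G_δ σ-ideal with property (*) containing only meager sets, and suppose E has only finitely many limit points. Then there exists a compact upward closed set F ⊆ K(E) such that for every nonempty G_δ set G ⊆ E that is everywhere big with respect to I, the set G* is nonmeager in F. -/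
open TopologicalSpace

variable {E : Type*} [MetricSpace E] [CompactSpace E]

/-- The star of an open set is open in the hyperspace. -/
lemma star_isOpen {U : Set E} (hU : IsOpen U) : IsOpen (star U) := by
  rw [isOpen_iff_forall_mem_open]
  rintro K ⟨x, hxK, hxU⟩
  rcases Metric.isOpen_iff.1 hU x hxU with ⟨ε, hε, hball⟩
  refine ⟨{L : NonemptyCompacts E | Metric.infDist x (L : Set E) < ε}, ?_, ?_, ?_⟩
  · rintro L hL
    rcases (Metric.infDist_lt_iff L.nonempty).1 hL with ⟨y, hyL, hy⟩
    exact ⟨y, hyL, hball (by simpa [Metric.mem_ball, dist_comm] using hy)⟩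
  · exact isOpen_lt (Metric.lipschitz_infDist_set x).continuous continuous_const
  · simpa [Metric.mem_ball] using ((IsClosed.mem_iff_infDist_zero K.isCompact.isClosed
      K.nonempty).1 hxK) ▸ hε

/-- `{K : a ∈ K}` is closed in the hyperspace. -/
lemma mem_isClosed (a : E) : IsClosed {K : NonemptyCompacts E | a ∈ (K : Set E)} := by
  have : {K : NonemptyCompacts E | a ∈ (K : Set E)}
      = (fun K : NonemptyCompacts E => Metric.infDist a (K : Set E)) ⁻¹' {0} := by
    ext K
    simpa using (IsClosed.mem_iff_infDist_zero K.isCompact.isClosed K.nonempty (x := a))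
  rw [this]
  exact IsClosed.preimage (Metric.lipschitz_infDist_set a).continuous isClosed_singleton

/-- If `E` is a compact Polish space with only finitely many limit points and
`I` is a G_δ σ-ideal of compact sets with property (*) containing only meager sets, then
there is a compact upward closed `F ⊆ K(E)` such that `G*` is nonmeager in `F` for every
nonempty G_δ set `G` that is everywhere big with respect to `I`. -/
theorem stmt_16
    (I : Set (NonemptyCompacts E)) (hIne : I.Nonempty)
    (hIdown : ∀ K ∈ I, ∀ L : NonemptyCompacts E, (L : Set E) ⊆ (K : Set E) → L ∈ I)
    (hIunion : ∀ K ∈ I, ∀ L ∈ I, K ⊔ L ∈ I)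
    (hIsigma : ∀ f : ℕ → NonemptyCompacts E, (∀ n, f n ∈ I) →
      ∀ K : NonemptyCompacts E, (K : Set E) = ⋃ n, ((f n : Set E)) → K ∈ I)
    (hIGδ : IsGδ (I : Set (NonemptyCompacts E)))
    (hIstar : ∀ f : ℕ → NonemptyCompacts E, (∀ n, f n ∈ I) →
      ∃ G : Set E, IsGδ G ∧ (⋃ n, ((f n : Set E))) ⊆ G ∧
        ∀ K : NonemptyCompacts E, (K : Set E) ⊆ G → K ∈ I)
    (hImeager : ∀ K ∈ I, IsMeagre ((K : NonemptyCompacts E) : Set E))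
    (hlim : {x : E | ¬ IsOpen ({x} : Set E)}.Finite) :
    ∃ F : Set (NonemptyCompacts E), IsCompact F ∧
      (∀ K ∈ F, ∀ L : NonemptyCompacts E, (K : Set E) ⊆ (L : Set E) → L ∈ F) ∧
      ∀ G : Set E, IsGδ G → G.Nonempty →
        (∀ U : Set E, IsOpen U → (U ∩ G).Nonempty →
          ¬ ∃ K ∈ I, (K : Set E) = closure (U ∩ G)) →
        ¬ MeagerIn (star G) F := by
  classical
  -- the set of limit points whose singleton is not in `I`
  set A : Set E := {x : E | ¬ IsOpen ({x} : Set E) ∧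
      (⟨⟨{x}, isCompact_singleton⟩, Set.singleton_nonempty x⟩ : NonemptyCompacts E) ∉ I} with hA
  have hAfin : A.Finite := hlim.subset (fun x hx => hx.1)
  set F : Set (NonemptyCompacts E) := {K | A ⊆ (K : Set E)} with hF
  have hFclosed : IsClosed F := by
    have : F = ⋂ a ∈ A, {K : NonemptyCompacts E | a ∈ (K : Set E)} := by
      ext K; simp [hF, Set.subset_def]
    rw [this]
    exact isClosed_biInter fun a _ => mem_isClosed a
  refine ⟨F, hFclosed.isCompact, fun K hK L hKL => hK.trans hKL, ?_⟩
  intro G hGδ hGne hbig hmeag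
  -- `F` as a subspace is a complete metric space, hence Baire
  haveI : CompleteSpace F := hFclosed.completeSpace_coe
  by_cases hiso : ∃ x ∈ G, IsOpen ({x} : Set E)
  · -- `G` contains an isolated point `x`
    obtain ⟨x, hxG, hxopen⟩ := hiso
    set K₀ : NonemptyCompacts E :=
      ⟨⟨A ∪ {x}, (hAfin.union (Set.finite_singleton x)).isCompact⟩, ⟨x, Or.inr rfl⟩⟩ with hK₀
    have hK₀F : K₀ ∈ F := Set.subset_union_left
    have hK₀W : K₀ ∈ star ({x} : Set E) := ⟨x, Or.inr rfl, rfl⟩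
    have hWopen : IsOpen (Subtype.val ⁻¹' star ({x} : Set E) : Set F) :=
      (star_isOpen hxopen).preimage continuous_subtype_val
    have hdense : Dense ((Subtype.val ⁻¹' star G : Set F)ᶜ) := dense_of_mem_residual hmeag
    obtain ⟨L, hL1, hL2⟩ := hdense.exists_mem_open hWopen ⟨⟨K₀, hK₀F⟩, hK₀W⟩
    obtain ⟨y, hyL, hyx⟩ := hL2
    exact hL1 ⟨y, hyL, hyx ▸ hxG⟩
  · -- every point of `G` is a limit point; show `G` meets `A`
    push_neg at hiso
    obtain ⟨x, hxG⟩ := hGne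
    have hxlim : ¬ IsOpen ({x} : Set E) := hiso x hxG
    -- isolate `x` from the other limit points
    set S : Set E := {y : E | ¬ IsOpen ({y} : Set E)} \ {x} with hS
    have hSclosed : IsClosed S := (hlim.subset Set.diff_subset).isClosed
    have hUG : Sᶜ ∩ G = {x} := by
      apply Set.Subset.antisymm
      · rintro y ⟨hyU, hyG⟩
        have : ¬ IsOpen ({y} : Set E) := hiso y hyG
        by_contra hyx
        exact hyU ⟨this, hyx⟩
      · rintro y rfl
        exact ⟨fun h => h.2 rfl, hxG⟩
    have hbigx := hbig Sᶜ hSclosed.isOpen_compl (hUG ▸ Set.singleton_nonempty x)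
    have hxA : x ∈ A := by
      refine ⟨hxlim, fun hmem => hbigx ?_⟩
      exact ⟨_, hmem, by simp [hUG]⟩
    -- every member of `F` contains `x ∈ G`, so `star G` is everything in `F`
    have hsub : (Set.univ : Set F) ⊆ (Subtype.val ⁻¹' star G : Set F) := by
      rintro ⟨K, hKF⟩ -
      exact ⟨x, hKF hxA, hxG⟩
    have : IsMeagre (Set.univ : Set F) := hmeag.mono hsub
    have hdense : Dense ((Set.univ : Set F)ᶜ) := dense_of_mem_residual this
    rw [Set.compl_univ] at hdense
    have hFne : Nonempty F := ⟨⟨⟨⟨A, hAfin.isCompact⟩, ⟨x, hxA⟩⟩, fun a ha => ha⟩⟩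
    exact (dense_iff_closure_eq.1 hdense ▸ Set.empty_ne_univ) (by simp)
end

section
/- Let E be a compact Polish space, M ⊆ E a compact meager set with at least three points such that every nonempty relatively open subset of M has closure not in a given ideal I, and suppose E \ M contains at least three limit points a_1, a_2, a_3 of E. Then there exist nonempty open sets V_1, V_2, V_3 ⊆ E with pairwise disjoint closures, each intersecting M, none containing any a_i, and nonempty open sets U_1, U_2, U_3 covering E such that cl(V_1) ⊆ U_2 \ (cl(U_3) ∪ cl(U_1)), cl(V_2) ⊆ U_3 \ (cl(U_1) ∪ cl(U_2)), and cl(V_3) ⊆ U_1 \ (cl(U_2) ∪ cl(U_3)). -/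
/-- Given a compact meager set `M` with at least three points, everywhere big
with respect to an ideal `I`, and three distinct limit points `a₁, a₂, a₃` of `E` outside
`M`, there exist open sets `V₁, V₂, V₃` (pairwise disjoint closures, each meeting `M`,
avoiding the `aᵢ`) and an open cover `U₁, U₂, U₃` of `E` with
`cl(V₁) ⊆ U₂ \ (cl(U₃) ∪ cl(U₁))`, `cl(V₂) ⊆ U₃ \ (cl(U₁) ∪ cl(U₂))`,
`cl(V₃) ⊆ U₁ \ (cl(U₂) ∪ cl(U₃))`. -/
theorem stmt_17 {E : Type*} [MetricSpace E] [CompactSpace E]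
    (I : Set (Set E))
    (M : Set E) (hMc : IsCompact M) (hMm : IsMeagre M)
    (hM3 : ∃ x y z : E, x ∈ M ∧ y ∈ M ∧ z ∈ M ∧ x ≠ y ∧ x ≠ z ∧ y ≠ z)
    (hMbig : ∀ U : Set E, IsOpen U → (U ∩ M).Nonempty → closure (U ∩ M) ∉ I)
    (a : Fin 3 → E)
    (ha : Function.Injective a)
    (haM : ∀ i, a i ∉ M)
    (halim : ∀ i, ¬ IsOpen ({a i} : Set E)) :
    ∃ V₁ V₂ V₃ U₁ U₂ U₃ : Set E,
      IsOpen V₁ ∧ IsOpen V₂ ∧ IsOpen V₃ ∧ IsOpen U₁ ∧ IsOpen U₂ ∧ IsOpen U₃ ∧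
      V₁.Nonempty ∧ V₂.Nonempty ∧ V₃.Nonempty ∧
      U₁.Nonempty ∧ U₂.Nonempty ∧ U₃.Nonempty ∧
      Disjoint (closure V₁) (closure V₂) ∧ Disjoint (closure V₁) (closure V₃) ∧
      Disjoint (closure V₂) (closure V₃) ∧
      (V₁ ∩ M).Nonempty ∧ (V₂ ∩ M).Nonempty ∧ (V₃ ∩ M).Nonempty ∧
      (∀ i, a i ∉ V₁ ∧ a i ∉ V₂ ∧ a i ∉ V₃) ∧
      U₁ ∪ U₂ ∪ U₃ = Set.univ ∧
      closure V₁ ⊆ U₂ \ (closure U₃ ∪ closure U₁) ∧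
      closure V₂ ⊆ U₃ \ (closure U₁ ∪ closure U₂) ∧
      closure V₃ ⊆ U₁ \ (closure U₂ ∪ closure U₃) := by
  obtain ⟨x, y, z, hx, hy, hz, hxy, hxz, hyz⟩ := hM3
  have hax : ∀ i, a i ≠ x := fun i h => haM i (h ▸ hx)
  have hay : ∀ i, a i ≠ y := fun i h => haM i (h ▸ hy)
  have haz : ∀ i, a i ≠ z := fun i h => haM i (h ▸ hz)
  obtain ⟨r, hr0, hdxy, hdxz, hdyz, hra⟩ :
      ∃ r > 0, 4*r ≤ dist x y ∧ 4*r ≤ dist x z ∧ 4*r ≤ dist y z ∧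
        ∀ i, 4*r ≤ dist (a i) x ∧ 4*r ≤ dist (a i) y ∧ 4*r ≤ dist (a i) z := by
    set B : Fin 3 → ℝ := fun i => min (dist (a i) x) (min (dist (a i) y) (dist (a i) z))
      with hB
    set A : ℝ := min (dist x y) (min (dist x z) (dist y z)) with hA
    set N : ℝ := min A (min (B 0) (min (B 1) (B 2))) with hN
    have hNA : N ≤ A := min_le_left _ _
    have hNB : ∀ i, N ≤ B i := by
      intro i
      fin_cases i
      · exact (min_le_right _ _).trans (min_le_left _ _)
      · exact (min_le_right _ _).trans ((min_le_right _ _).trans (min_le_left _ _))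
      · exact (min_le_right _ _).trans ((min_le_right _ _).trans (min_le_right _ _))
    have hBx : ∀ i, B i ≤ dist (a i) x := fun i => min_le_left _ _
    have hBy : ∀ i, B i ≤ dist (a i) y := fun i => (min_le_right _ _).trans (min_le_left _ _)
    have hBz : ∀ i, B i ≤ dist (a i) z := fun i => (min_le_right _ _).trans (min_le_right _ _)
    have hAxy : A ≤ dist x y := min_le_left _ _
    have hAxz : A ≤ dist x z := (min_le_right _ _).trans (min_le_left _ _)
    have hAyz : A ≤ dist y z := (min_le_right _ _).trans (min_le_right _ _)
    have hN0 : 0 < N := by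
      have h1 := dist_pos.mpr hxy
      have h2 := dist_pos.mpr hxz
      have h3 := dist_pos.mpr hyz
      have hB0 : ∀ i, 0 < B i := by
        intro i
        have := dist_pos.mpr (hax i)
        have := dist_pos.mpr (hay i)
        have := dist_pos.mpr (haz i)
        simp only [hB, lt_min_iff]
        exact ⟨‹_›, ‹_›, ‹_›⟩
      have := hB0 0; have := hB0 1; have := hB0 2
      simp only [hN, hA, lt_min_iff]
      exact ⟨⟨‹_›, ‹_›, ‹_›⟩, ‹_›, ‹_›, ‹_›⟩
    refine ⟨N / 4, by linarith, by linarith, by linarith, by linarith, ?_⟩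
    intro i
    have h1 := hNB i
    have h2 := hBx i; have h3 := hBy i; have h4 := hBz i
    exact ⟨by linarith, by linarith, by linarith⟩
  refine ⟨Metric.ball x r, Metric.ball y r, Metric.ball z r,
    Metric.ball z (2*r) ∪ ((Metric.closedBall x (3*r/2))ᶜ ∩ (Metric.closedBall y (3*r/2))ᶜ),
    Metric.ball x (2*r), Metric.ball y (2*r), ?_⟩
  have hclV₁ : closure (Metric.ball x r) ⊆ Metric.closedBall x r :=
    Metric.closure_ball_subset_closedBall
  have hclV₂ : closure (Metric.ball y r) ⊆ Metric.closedBall y r :=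
    Metric.closure_ball_subset_closedBall
  have hclV₃ : closure (Metric.ball z r) ⊆ Metric.closedBall z r :=
    Metric.closure_ball_subset_closedBall
  have hclU₂ : closure (Metric.ball x (2*r)) ⊆ Metric.closedBall x (2*r) :=
    Metric.closure_ball_subset_closedBall
  have hclU₃ : closure (Metric.ball y (2*r)) ⊆ Metric.closedBall y (2*r) :=
    Metric.closure_ball_subset_closedBall
  have hclU₁ : closure (Metric.ball z (2*r) ∪
      ((Metric.closedBall x (3*r/2))ᶜ ∩ (Metric.closedBall y (3*r/2))ᶜ)) ⊆
      Metric.closedBall z (2*r) ∪ ((Metric.ball x (3*r/2))ᶜ ∩ (Metric.ball y (3*r/2))ᶜ) := by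
    rw [closure_union]
    refine Set.union_subset_union Metric.closure_ball_subset_closedBall (closure_minimal ?_ ?_)
    · exact Set.inter_subset_inter (Set.compl_subset_compl.mpr Metric.ball_subset_closedBall)
        (Set.compl_subset_compl.mpr Metric.ball_subset_closedBall)
    · exact IsClosed.inter Metric.isOpen_ball.isClosed_compl Metric.isOpen_ball.isClosed_compl
  have hdisj : ∀ (p q : E) (s t : ℝ), s + t < dist p q →
      Disjoint (Metric.closedBall p s) (Metric.closedBall q t) := fun p q s t h =>
    Metric.closedBall_disjoint_closedBall h
  refine ⟨Metric.isOpen_ball, Metric.isOpen_ball, Metric.isOpen_ball,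
    (Metric.isOpen_ball.union (IsOpen.inter Metric.isClosed_closedBall.isOpen_compl
      Metric.isClosed_closedBall.isOpen_compl)),
    Metric.isOpen_ball, Metric.isOpen_ball,
    ⟨x, Metric.mem_ball_self hr0⟩, ⟨y, Metric.mem_ball_self hr0⟩, ⟨z, Metric.mem_ball_self hr0⟩,
    ⟨z, Or.inl (Metric.mem_ball_self (by linarith))⟩,
    ⟨x, Metric.mem_ball_self (by linarith)⟩, ⟨y, Metric.mem_ball_self (by linarith)⟩,
    ?_, ?_, ?_, ?_, ?_, ?_, ?_, ?_, ?_, ?_, ?_⟩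
  · exact Set.disjoint_of_subset hclV₁ hclV₂ (hdisj x y r r (by linarith))
  · exact Set.disjoint_of_subset hclV₁ hclV₃ (hdisj x z r r (by linarith))
  · exact Set.disjoint_of_subset hclV₂ hclV₃ (hdisj y z r r (by linarith))
  · exact ⟨x, Metric.mem_ball_self hr0, hx⟩
  · exact ⟨y, Metric.mem_ball_self hr0, hy⟩
  · exact ⟨z, Metric.mem_ball_self hr0, hz⟩
  · intro i
    obtain ⟨h1, h2, h3⟩ := hra i
    refine ⟨fun h => ?_, fun h => ?_, fun h => ?_⟩
    · rw [Metric.mem_ball] at h; linarith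
    · rw [Metric.mem_ball] at h; linarith
    · rw [Metric.mem_ball] at h; linarith
  · -- cover
    ext p
    simp only [Set.mem_union, Set.mem_univ, iff_true, Set.mem_inter_iff, Set.mem_compl_iff,
      Metric.mem_ball, Metric.mem_closedBall]
    by_cases h1 : dist p x ≤ 3*r/2
    · exact Or.inl (Or.inr (by linarith))
    · by_cases h2 : dist p y ≤ 3*r/2
      · exact Or.inr (by linarith)
      · exact Or.inl (Or.inl (Or.inr ⟨by push_neg at h1; linarith, by push_neg at h2; linarith⟩))
  · -- cl V₁ ⊆ U₂ \ (cl U₃ ∪ cl U₁)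
    intro p hp
    have hp' : dist p x ≤ r := hclV₁ hp
    refine ⟨Metric.mem_ball.mpr (by linarith), ?_⟩
    rintro (h | h)
    · have h' : dist p y ≤ 2*r := hclU₃ h
      have t := dist_triangle x p y
      rw [dist_comm x p] at t
      linarith
    · rcases hclU₁ h with h' | ⟨h', _⟩
      · have h'' : dist p z ≤ 2*r := h'
        have t := dist_triangle x p z
        rw [dist_comm x p] at t
        linarith
      · exact h' (Metric.mem_ball.mpr (by linarith))
  · -- cl V₂ ⊆ U₃ \ (cl U₁ ∪ cl U₂)
    intro p hp
    have hp' : dist p y ≤ r := hclV₂ hp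
    refine ⟨Metric.mem_ball.mpr (by linarith), ?_⟩
    rintro (h | h)
    · rcases hclU₁ h with h' | ⟨_, h'⟩
      · have h'' : dist p z ≤ 2*r := h'
        have t := dist_triangle y p z
        rw [dist_comm y p] at t
        linarith
      · exact h' (Metric.mem_ball.mpr (by linarith))
    · have h' : dist p x ≤ 2*r := hclU₂ h
      have t := dist_triangle x p y
      rw [dist_comm x p] at t
      linarith
  · -- cl V₃ ⊆ U₁ \ (cl U₂ ∪ cl U₃)
    intro p hp
    have hp' : dist p z ≤ r := hclV₃ hp
    refine ⟨Or.inl (Metric.mem_ball.mpr (by linarith)), ?_⟩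
    rintro (h | h)
    · have h' : dist p x ≤ 2*r := hclU₂ h
      have t := dist_triangle x p z
      rw [dist_comm x p] at t
      linarith
    · have h' : dist p y ≤ 2*r := hclU₃ h
      have t := dist_triangle y p z
      rw [dist_comm y p] at t
      linarith
end
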